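/- arXiv:0911.3969 — 2 statements merged into one kernel-verified Lean document; each statement's English description precedes it below -/
import Mathlib

section
/- Let D be an oriented graph on n vertices with bias(D) ≤ e(D)/8. Then D contains at least e(D)^2/(8n) directed paths of length two x→y, y→u whose end vertex u has out-degree at least e(D)/(8n). -/
open Finset

open scoped Classical

/-- The number of arcs from `A` to `B` in the oriented graph with arc relation `Adj`. -/
def arcsFrom {V : Type*} (Adj : V → V → Prop) [DecidableRel Adj] (A B : Finset V) : ℕ :=
  ((A ×ˢ B).filter fun p => Adj p.1 p.2).card

/-- The total number of arcs. -/
def numArcs {V : Type*} [Fintype V] (Adj : V → V → Prop) [DecidableRel Adj] : ℕ :=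
  arcsFrom Adj Finset.univ Finset.univ

/-- `bias(D) = max { e(A,B) : A,B ⊆ V, e(B,A) ≤ e(A,B)/2 }`. -/
def bias {V : Type*} [Fintype V] [DecidableEq V] (Adj : V → V → Prop) [DecidableRel Adj] : ℕ :=
  Finset.univ.sup fun p : Finset V × Finset V =>
    if 2 * arcsFrom Adj p.2 p.1 ≤ arcsFrom Adj p.1 p.2 then arcsFrom Adj p.1 p.2 else 0

/-- The out-degree of a vertex. -/
def outDeg {V : Type*} [Fintype V] (Adj : V → V → Prop) [DecidableRel Adj] (v : V) : ℕ :=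
  (Finset.univ.filter fun w : V => Adj v w).card

/-- The number of directed paths of length two `x→y, y→u` whose end vertex `u` has
out-degree at least `b`. -/
noncomputable def pathsTwoEndDeg {V : Type*} [Fintype V]
    (Adj : V → V → Prop) [DecidableRel Adj] (b : ℝ) : ℕ :=
  (Finset.univ.filter fun t : V × V × V =>
      Adj t.1 t.2.1 ∧ Adj t.2.1 t.2.2 ∧ b ≤ (outDeg Adj t.2.2 : ℝ)).card

section aux
variable {V : Type*} [Fintype V] (Adj : V → V → Prop) [DecidableRel Adj]

lemma arcsFrom_eq (A B : Finset V) :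
    arcsFrom Adj A B = ∑ x, ∑ y, if x ∈ A ∧ y ∈ B ∧ Adj x y then 1 else 0 := by
  rw [arcsFrom, Finset.card_filter, Finset.sum_product]
  rw [← Finset.univ_inter A, ← Finset.sum_ite_mem]
  refine Finset.sum_congr rfl fun x _ => ?_
  by_cases hx : x ∈ A
  · simp only [hx, if_true, true_and]
    rw [← Finset.univ_inter B, ← Finset.sum_ite_mem]
    refine Finset.sum_congr rfl fun y _ => ?_
    by_cases hy : y ∈ B <;> simp [hx, hy]
  · simp [hx]

lemma outDeg_eq (v : V) : outDeg Adj v = ∑ u, if Adj v u then 1 else 0 :=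
  Finset.card_filter _ _

variable [DecidableEq V]

lemma bias_key {P Q : Finset V} (h : 2 * arcsFrom Adj Q P ≤ arcsFrom Adj P Q) :
    arcsFrom Adj P Q ≤ bias Adj := by
  have hle := Finset.le_sup (f := fun p : Finset V × Finset V =>
    if 2 * arcsFrom Adj p.2 p.1 ≤ arcsFrom Adj p.1 p.2 then arcsFrom Adj p.1 p.2 else 0)
    (Finset.mem_univ (P, Q))
  rw [bias]
  exact le_trans (le_of_eq (by simp [h])) hle

end aux

/-- Every oriented graph `D` on `n` vertices with `bias(D) ≤ e(D)/8` contains at least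
`e(D)^2/(8n)` directed paths of length two whose end vertex has out-degree at least
`e(D)/(8n)`. -/
theorem stmt13 {V : Type*} [Fintype V] [DecidableEq V]
    (Adj : V → V → Prop) [DecidableRel Adj]
    (hasym : ∀ x y : V, Adj x y → ¬ Adj y x)
    (hbias : (bias Adj : ℝ) ≤ (numArcs Adj : ℝ) / 8) :
    (pathsTwoEndDeg Adj ((numArcs Adj : ℝ) / (8 * (Fintype.card V : ℝ))) : ℝ) ≥
      (numArcs Adj : ℝ) ^ 2 / (8 * (Fintype.card V : ℝ)) := by
  classical
  set n := Fintype.card V with hn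
  set E := numArcs Adj with hEdef
  rw [ge_iff_le]
  by_cases hE0 : E = 0
  · rw [hE0]
    simp only [Nat.cast_zero]
    rw [zero_pow (by norm_num), zero_div]
    exact Nat.cast_nonneg _
  have hEpos : 0 < E := Nat.pos_of_ne_zero hE0
  have hV : Nonempty V := by
    by_contra hne
    have : IsEmpty V := not_nonempty_iff.mp hne
    apply hE0
    rw [hEdef, numArcs, arcsFrom]
    simp
  have hnpos : 0 < n := Fintype.card_pos
  have hnR : (0:ℝ) < n := by exact_mod_cast hnpos
  have hER : (0:ℝ) < E := by exact_mod_cast hEpos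
  set b : ℝ := (E : ℝ) / (8 * n) with hb
  have hbnn : 0 ≤ b := by positivity
  set ind : V → ℕ := fun y => ∑ x : V, if Adj x y then 1 else 0 with hind
  set g : V → ℕ := fun y => ∑ u : V, if Adj y u ∧ b ≤ (outDeg Adj u : ℝ) then 1 else 0 with hg
  set S : Finset V := univ.filter fun u => (outDeg Adj u : ℝ) < b with hS
  set A : Finset V := univ.filter fun y => 2 * ind y < g y with hA
  set gg : V → ℕ := fun y => if y ∈ A then 0 else g y with hgg
  -- membership facts
  have hmemS : ∀ u : V, u ∈ S ↔ (outDeg Adj u : ℝ) < b := by intro u; simp [hS]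
  have hmemA : ∀ y : V, y ∈ A ↔ 2 * ind y < g y := by intro y; simp [hA]
  -- E as a double sum
  have hE : E = ∑ x : V, ∑ y : V, if Adj x y then 1 else 0 := by
    rw [hEdef, numArcs, arcsFrom_eq]
    simp
  -- paths count
  have hP : pathsTwoEndDeg Adj b = ∑ y : V, ind y * g y := by
    rw [pathsTwoEndDeg, Finset.card_filter]
    rw [show (Finset.univ : Finset (V × V × V)) = Finset.univ ×ˢ Finset.univ by
      rw [Finset.univ_product_univ]]
    rw [Finset.sum_product]
    have step1 : ∀ x : V, (∑ t : V × V, if Adj x t.1 ∧ Adj t.1 t.2 ∧ b ≤ (outDeg Adj t.2 : ℝ)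
        then 1 else 0) = ∑ y : V, (if Adj x y then 1 else 0) * g y := by
      intro x
      rw [show (Finset.univ : Finset (V × V)) = Finset.univ ×ˢ Finset.univ by
        rw [Finset.univ_product_univ]]
      rw [Finset.sum_product]
      refine Finset.sum_congr rfl fun y _ => ?_
      by_cases h : Adj x y
      · simp [h, hg]
      · simp [h]
    simp only [step1]
    rw [Finset.sum_comm]
    refine Finset.sum_congr rfl fun y _ => ?_
    rw [← Finset.sum_mul, hind]
  -- arcs from S bounded by E/8
  have hSVnat : arcsFrom Adj S univ = ∑ x : V, if (outDeg Adj x : ℝ) < b then outDeg Adj x else 0 := by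
    rw [arcsFrom_eq]
    refine Finset.sum_congr rfl fun x _ => ?_
    by_cases hx : (outDeg Adj x : ℝ) < b
    · have hxS : x ∈ S := (hmemS x).mpr hx
      simp only [hxS, mem_univ, true_and, if_true, hx]
      exact (outDeg_eq Adj x).symm
    · have hxS : x ∉ S := fun h => hx ((hmemS x).mp h)
      simp [hxS, hx]
  have hSV : (arcsFrom Adj S univ : ℝ) ≤ (E : ℝ) / 8 := by
    rw [hSVnat]
    push_cast
    calc (∑ x : V, if (outDeg Adj x : ℝ) < b then (outDeg Adj x : ℝ) else 0)
        ≤ ∑ _x : V, b := by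
          refine Finset.sum_le_sum fun x _ => ?_
          by_cases hx : (outDeg Adj x : ℝ) < b
          · rw [if_pos hx]; exact hx.le
          · rw [if_neg hx]; exact hbnn
      _ = n * b := by rw [Finset.sum_const, Finset.card_univ, ← hn, nsmul_eq_mul]
      _ = (E : ℝ) / 8 := by rw [hb]; field_simp
  -- bias bound helper
  have hkey : ∀ P Q : Finset V, 2 * arcsFrom Adj Q P ≤ arcsFrom Adj P Q →
      (arcsFrom Adj P Q : ℝ) ≤ (E : ℝ) / 8 := by
    intro P Q h
    have h1 : arcsFrom Adj P Q ≤ bias Adj := bias_key Adj h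
    calc (arcsFrom Adj P Q : ℝ) ≤ (bias Adj : ℝ) := by exact_mod_cast h1
      _ ≤ (E : ℝ) / 8 := hbias
  -- arcs into S bounded by E/4
  have hVS : (arcsFrom Adj univ S : ℝ) ≤ (E : ℝ) / 4 := by
    rcases le_or_gt (2 * arcsFrom Adj S univ) (arcsFrom Adj univ S) with h | h
    · have := hkey univ S h; linarith
    · have h2 : (arcsFrom Adj univ S : ℝ) ≤ 2 * (arcsFrom Adj S univ : ℝ) := by
        exact_mod_cast h.le
      linarith
  -- split E : arcs into S plus sum of g
  have hEsplit : arcsFrom Adj univ S + ∑ y : V, g y = E := by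
    rw [arcsFrom_eq, hE]
    rw [hg]
    rw [← Finset.sum_add_distrib]
    refine Finset.sum_congr rfl fun x _ => ?_
    rw [← Finset.sum_add_distrib]
    refine Finset.sum_congr rfl fun y _ => ?_
    by_cases h1 : Adj x y
    · rcases lt_or_ge ((outDeg Adj y : ℝ)) b with h2 | h2
      · have hyS : y ∈ S := (hmemS y).mpr h2
        simp [h1, hyS, not_le.mpr h2]
      · have hyS : y ∉ S := fun hh => absurd ((hmemS y).mp hh) (not_lt.mpr h2)
        simp [h1, hyS, h2]
    · simp [h1]
  -- arcs from A to complement of S equals sum of g over A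
  have hACnat : arcsFrom Adj A (univ \ S) = ∑ y : V, if y ∈ A then g y else 0 := by
    rw [arcsFrom_eq]
    refine Finset.sum_congr rfl fun x _ => ?_
    by_cases hx : x ∈ A
    · simp only [hx, true_and, if_true, hg]
      refine Finset.sum_congr rfl fun y _ => ?_
      by_cases h1 : Adj x y
      · rcases lt_or_ge ((outDeg Adj y : ℝ)) b with h2 | h2
        · have hyS : y ∈ S := (hmemS y).mpr h2
          simp [h1, hyS, not_le.mpr h2]
        · have hyS : y ∉ S := fun hh => absurd ((hmemS y).mp hh) (not_lt.mpr h2)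
          simp [h1, hyS, h2]
      · simp [h1]
    · simp [hx]
  -- arcs from complement of S to A at most sum of ind over A
  have hCA : arcsFrom Adj (univ \ S) A ≤ ∑ y : V, if y ∈ A then ind y else 0 := by
    rw [arcsFrom_eq]
    have step : ∀ y : V, (if y ∈ A then ind y else 0)
        = ∑ x : V, if y ∈ A ∧ Adj x y then 1 else 0 := by
      intro y
      by_cases hy : y ∈ A
      · simp only [hy, if_true, true_and, hind]
      · simp [hy]
    calc _ ≤ ∑ x : V, ∑ y : V, (if y ∈ A ∧ Adj x y then (1:ℕ) else 0) := by
          refine Finset.sum_le_sum fun x _ => Finset.sum_le_sum fun y _ => ?_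
          by_cases hc : y ∈ A ∧ Adj x y
          · rw [if_pos hc]
            split <;> norm_num
          · rw [if_neg hc, if_neg (fun hh => hc hh.2)]
      _ = ∑ y : V, ∑ x : V, (if y ∈ A ∧ Adj x y then (1:ℕ) else 0) := Finset.sum_comm
      _ = ∑ y : V, if y ∈ A then ind y else 0 :=
          Finset.sum_congr rfl fun y _ => (step y).symm
  -- bias applies to the pair (A, univ \ S)
  have hACbias : (arcsFrom Adj A (univ \ S) : ℝ) ≤ (E : ℝ) / 8 := by
    apply hkey
    calc 2 * arcsFrom Adj (univ \ S) A ≤ 2 * ∑ y : V, if y ∈ A then ind y else 0 :=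
          Nat.mul_le_mul_left 2 hCA
      _ = ∑ y : V, if y ∈ A then 2 * ind y else 0 := by
          rw [Finset.mul_sum]
          refine Finset.sum_congr rfl fun y _ => ?_
          by_cases hy : y ∈ A <;> simp [hy]
      _ ≤ ∑ y : V, if y ∈ A then g y else 0 := by
          refine Finset.sum_le_sum fun y _ => ?_
          by_cases hy : y ∈ A
          · simp only [hy, if_true]
            exact ((hmemA y).mp hy).le
          · simp [hy]
      _ = arcsFrom Adj A (univ \ S) := hACnat.symm
  -- sum of g splits over A and its complement
  have hgsplit : ∑ y : V, g y = (∑ y : V, if y ∈ A then g y else 0) + ∑ y : V, gg y := by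
    rw [← Finset.sum_add_distrib]
    refine Finset.sum_congr rfl fun y _ => ?_
    by_cases hy : y ∈ A <;> simp [hy, hgg]
  -- lower bound on sum of gg
  have hggsum : (5 : ℝ) * E / 8 ≤ ((∑ y : V, gg y : ℕ) : ℝ) := by
    have c1 : ((arcsFrom Adj univ S : ℕ) : ℝ) + ((∑ y : V, g y : ℕ) : ℝ) = (E : ℝ) := by
      exact_mod_cast congrArg (Nat.cast (R := ℝ)) hEsplit
    have c2 : ((∑ y : V, g y : ℕ) : ℝ) =
        ((arcsFrom Adj A (univ \ S) : ℕ) : ℝ) + ((∑ y : V, gg y : ℕ) : ℝ) := by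
      rw [← hACnat] at hgsplit
      exact_mod_cast congrArg (Nat.cast (R := ℝ)) hgsplit
    linarith
  -- sum of squares of gg bounded by twice the path count
  have hsq : ∑ y : V, gg y * gg y ≤ 2 * ∑ y : V, ind y * g y := by
    rw [Finset.mul_sum]
    refine Finset.sum_le_sum fun y _ => ?_
    by_cases hy : y ∈ A
    · simp [hgg, hy]
    · have h1 : gg y = g y := by simp [hgg, hy]
      have h2 : g y ≤ 2 * ind y := not_lt.mp (fun hc => hy ((hmemA y).mpr hc))
      rw [h1]
      calc g y * g y ≤ (2 * ind y) * g y := Nat.mul_le_mul_right _ h2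
        _ = 2 * (ind y * g y) := by ring
  -- Cauchy–Schwarz
  have hcs : ((∑ y : V, (gg y : ℝ)))^2 ≤ (∑ y : V, (gg y : ℝ)^2) * n := by
    have := Finset.sum_mul_sq_le_sq_mul_sq Finset.univ (fun y : V => (gg y : ℝ)) (fun _ => 1)
    simpa [Finset.card_univ, ← hn, mul_comm] using this
  -- final arithmetic
  have hPcast : (pathsTwoEndDeg Adj b : ℝ) = ((∑ y : V, ind y * g y : ℕ) : ℝ) := by
    exact_mod_cast congrArg (Nat.cast (R := ℝ)) hP
  set p : ℝ := ((∑ y : V, ind y * g y : ℕ) : ℝ) with hp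
  set s : ℝ := ∑ y : V, (gg y : ℝ) with hs
  have hscast : ((∑ y : V, gg y : ℕ) : ℝ) = s := by rw [hs]; push_cast; rfl
  have hqle : (∑ y : V, (gg y : ℝ)^2) ≤ 2 * p := by
    have := (Nat.cast_le (α := ℝ)).mpr hsq
    push_cast at this
    calc (∑ y : V, (gg y : ℝ)^2) = ∑ y : V, (gg y : ℝ) * (gg y : ℝ) := by
          refine Finset.sum_congr rfl fun y _ => by ring
      _ ≤ 2 * p := by rw [hp]; push_cast; exact this
  have hs5 : (5 : ℝ) * E / 8 ≤ s := by rw [← hscast]; exact hggsum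
  have hcs2 : s^2 ≤ 2 * p * n := by
    calc s^2 ≤ (∑ y : V, (gg y : ℝ)^2) * n := hcs
      _ ≤ 2 * p * n := by
          apply mul_le_mul_of_nonneg_right hqle (le_of_lt hnR)
  rw [hPcast]
  rw [div_le_iff₀ (by positivity : (0:ℝ) < 8 * n)]
  nlinarith [hs5, hcs2, hER.le, hnR, sq_nonneg (s - 5 * E / 8)]
end

section
/- Let D' be an oriented graph, let f > 0, and let l be a positive integer. If bias_{0.9}(D') < f and D is the l-blow-up of D', then bias(D) < 16·f·l^2. -/
open Finset

open scoped Classical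

/-- `bias_γ(D) = max { e(A,B) : A,B ⊆ V, e(B,A) ≤ γ e(A,B) }`. -/
noncomputable def biasGamma {V : Type*} [Fintype V] [DecidableEq V]
    (Adj : V → V → Prop) [DecidableRel Adj] (γ : ℝ) : ℕ :=
  Finset.univ.sup fun p : Finset V × Finset V =>
    if (arcsFrom Adj p.2 p.1 : ℝ) ≤ γ * (arcsFrom Adj p.1 p.2 : ℝ) then
      arcsFrom Adj p.1 p.2 else 0

/-- The `l`-blow-up of an oriented graph with arc relation `Adj'`: each vertex is
replaced by `l` copies, and there is an arc from every copy of `i` to every copy of `j`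
whenever `i→j` is an arc. -/
def blowupAdj {W : Type*} (Adj' : W → W → Prop) (l : ℕ) :
    W × Fin l → W × Fin l → Prop :=
  fun p q => Adj' p.1 q.1

instance {W : Type*} (Adj' : W → W → Prop) [inst : DecidableRel Adj'] (l : ℕ) :
    DecidableRel (blowupAdj Adj' l) :=
  fun p q => inst p.1 q.1

section aux

variable {W : Type*} [Fintype W] [DecidableEq W]

/-- fiber count -/
def cnt {l : ℕ} (A : Finset (W × Fin l)) (i : W) : ℕ :=
  (A.filter fun x => x.1 = i).card

lemma cnt_le {l : ℕ} (A : Finset (W × Fin l)) (i : W) : cnt A i ≤ l := by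
  have h : (A.filter fun x => x.1 = i).card ≤ (Finset.univ : Finset (Fin l)).card := by
    apply Finset.card_le_card_of_injOn (fun x => x.2)
    · intro x _; exact Finset.mem_univ _
    · intro x hx y hy hxy
      simp only [Finset.mem_coe, Finset.mem_filter] at hx hy
      exact Prod.ext (hx.2.trans hy.2.symm) hxy
  simpa [cnt] using h

lemma arcsFrom_eq_sum {V : Type*} (Adj : V → V → Prop) [DecidableRel Adj] (A B : Finset V) :
    arcsFrom Adj A B = ∑ x ∈ A, ∑ y ∈ B, if Adj x y then 1 else 0 := by
  rw [arcsFrom, Finset.card_filter, Finset.sum_product]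

lemma sum_fst {l : ℕ} (s : Finset (W × Fin l)) (G : W → ℕ) :
    ∑ x ∈ s, G x.1 = ∑ i : W, cnt s i * G i := by
  calc ∑ x ∈ s, G x.1
      = ∑ i : W, ∑ x ∈ s.filter (fun x => x.1 = i), G x.1 :=
        (Finset.sum_fiberwise s (fun x => x.1) (fun x => G x.1)).symm
    _ = ∑ i : W, ∑ _x ∈ s.filter (fun x => x.1 = i), G i := by
        refine Finset.sum_congr rfl fun i _ => Finset.sum_congr rfl fun x hx => ?_
        rw [(Finset.mem_filter.mp hx).2]
    _ = ∑ i : W, cnt s i * G i := by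
        refine Finset.sum_congr rfl fun i _ => ?_
        rw [Finset.sum_const, smul_eq_mul, cnt]

variable (Adj' : W → W → Prop) [DecidableRel Adj']

lemma arcsFrom_blowup {l : ℕ} (A B : Finset (W × Fin l)) :
    arcsFrom (blowupAdj Adj' l) A B
      = ∑ i : W, ∑ j : W, cnt A i * cnt B j * (if Adj' i j then 1 else 0) := by
  rw [arcsFrom_eq_sum]
  have h1 : ∀ x : W × Fin l,
      (∑ y ∈ B, if blowupAdj Adj' l x y then (1:ℕ) else 0)
        = ∑ j : W, cnt B j * (if Adj' x.1 j then 1 else 0) :=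
    fun x => sum_fst B (fun j => if Adj' x.1 j then 1 else 0)
  calc ∑ x ∈ A, ∑ y ∈ B, (if blowupAdj Adj' l x y then (1:ℕ) else 0)
      = ∑ x ∈ A, ∑ j : W, cnt B j * (if Adj' x.1 j then 1 else 0) :=
        Finset.sum_congr rfl fun x _ => h1 x
    _ = ∑ i : W, cnt A i * ∑ j : W, cnt B j * (if Adj' i j then 1 else 0) :=
        sum_fst A (fun i => ∑ j : W, cnt B j * (if Adj' i j then 1 else 0))
    _ = ∑ i : W, ∑ j : W, cnt A i * cnt B j * (if Adj' i j then 1 else 0) := by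
        refine Finset.sum_congr rfl fun i _ => ?_
        rw [Finset.mul_sum]
        exact Finset.sum_congr rfl fun j _ => by ring

/-- level set -/
def lev {l : ℕ} (A : Finset (W × Fin l)) (u : ℕ) : Finset W :=
  Finset.univ.filter fun i => u < cnt A i

lemma sum_ind {l : ℕ} (A : Finset (W × Fin l)) (i : W) :
    ∑ u ∈ Finset.range l, (if u < cnt A i then 1 else 0) = cnt A i := by
  rw [← Finset.card_filter]
  have : (Finset.range l).filter (fun u => u < cnt A i) = Finset.range (cnt A i) := by
    ext u
    simp only [Finset.mem_filter, Finset.mem_range]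
    have := cnt_le A i
    omega
  rw [this, Finset.card_range]

lemma arcsFrom_lev {l : ℕ} (A B : Finset (W × Fin l)) (u v : ℕ) :
    arcsFrom Adj' (lev A u) (lev B v)
      = ∑ i : W, ∑ j : W, (if u < cnt A i then 1 else 0) * (if v < cnt B j then 1 else 0)
          * (if Adj' i j then 1 else 0) := by
  rw [arcsFrom_eq_sum, lev, lev, Finset.sum_filter]
  refine Finset.sum_congr rfl fun i _ => ?_
  by_cases hi : u < cnt A i
  · simp only [hi, if_true, one_mul, Finset.sum_filter]
    refine Finset.sum_congr rfl fun j _ => ?_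
    by_cases hj : v < cnt B j <;> simp [hj]
  · simp [hi]

lemma sum_swap4 {M : Type*} [AddCommMonoid M] {ι κ : Type*} (s : Finset ι) (t : Finset ι)
    (f : ι → ι → κ → κ → M) [Fintype κ] :
    ∑ u ∈ s, ∑ v ∈ t, ∑ i : κ, ∑ j : κ, f u v i j
      = ∑ i : κ, ∑ j : κ, ∑ u ∈ s, ∑ v ∈ t, f u v i j :=
  calc ∑ u ∈ s, ∑ v ∈ t, ∑ i : κ, ∑ j : κ, f u v i j
      = ∑ u ∈ s, ∑ i : κ, ∑ v ∈ t, ∑ j : κ, f u v i j :=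
        Finset.sum_congr rfl fun u _ => Finset.sum_comm
    _ = ∑ i : κ, ∑ u ∈ s, ∑ v ∈ t, ∑ j : κ, f u v i j := Finset.sum_comm
    _ = ∑ i : κ, ∑ u ∈ s, ∑ j : κ, ∑ v ∈ t, f u v i j :=
        Finset.sum_congr rfl fun i _ => Finset.sum_congr rfl fun u _ => Finset.sum_comm
    _ = ∑ i : κ, ∑ j : κ, ∑ u ∈ s, ∑ v ∈ t, f u v i j :=
        Finset.sum_congr rfl fun i _ => Finset.sum_comm

lemma decomp {l : ℕ} (A B : Finset (W × Fin l)) :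
    ∑ u ∈ Finset.range l, ∑ v ∈ Finset.range l, arcsFrom Adj' (lev A u) (lev B v)
      = arcsFrom (blowupAdj Adj' l) A B := by
  rw [arcsFrom_blowup]
  calc ∑ u ∈ Finset.range l, ∑ v ∈ Finset.range l, arcsFrom Adj' (lev A u) (lev B v)
      = ∑ u ∈ Finset.range l, ∑ v ∈ Finset.range l, ∑ i : W, ∑ j : W,
          (if u < cnt A i then (1:ℕ) else 0) * (if v < cnt B j then 1 else 0)
            * (if Adj' i j then 1 else 0) := by
        refine Finset.sum_congr rfl fun u _ => Finset.sum_congr rfl fun v _ => ?_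
        exact arcsFrom_lev Adj' A B u v
    _ = ∑ i : W, ∑ j : W, ∑ u ∈ Finset.range l, ∑ v ∈ Finset.range l,
          (if u < cnt A i then (1:ℕ) else 0) * (if v < cnt B j then 1 else 0)
            * (if Adj' i j then 1 else 0) :=
        sum_swap4 (Finset.range l) (Finset.range l) _
    _ = ∑ i : W, ∑ j : W, cnt A i * cnt B j * (if Adj' i j then 1 else 0) := by
        refine Finset.sum_congr rfl fun i _ => Finset.sum_congr rfl fun j _ => ?_
        simp only [← Finset.sum_mul]
        rw [← Finset.sum_mul_sum, sum_ind, sum_ind]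

end aux

/-- If `bias_{0.9}(D') < f` and `D` is the `l`-blow-up of `D'`, then
`bias(D) < 16 f l^2`. -/
theorem stmt15 {W : Type*} [Fintype W] [DecidableEq W]
    (Adj' : W → W → Prop) [DecidableRel Adj']
    (hasym : ∀ x y : W, Adj' x y → ¬ Adj' y x)
    (f : ℝ) (hf : 0 < f) (l : ℕ) (hl : 0 < l)
    (hbias : (biasGamma Adj' (0.9 : ℝ) : ℝ) < f) :
    (bias (blowupAdj Adj' l) : ℝ) < 16 * f * (l : ℝ) ^ 2 := by
  have hlR : (0:ℝ) < (l : ℝ) := by exact_mod_cast hl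
  have hpos : (0:ℝ) < 16 * f * (l:ℝ)^2 := by positivity
  obtain ⟨p, -, hp⟩ := Finset.exists_mem_eq_sup (Finset.univ :
      Finset (Finset (W × Fin l) × Finset (W × Fin l))) ⟨(∅, ∅), Finset.mem_univ _⟩
    (fun p => if 2 * arcsFrom (blowupAdj Adj' l) p.2 p.1 ≤ arcsFrom (blowupAdj Adj' l) p.1 p.2
      then arcsFrom (blowupAdj Adj' l) p.1 p.2 else 0)
  rw [bias, hp]
  split_ifs with hcond
  · -- main case
    set A := p.1 with hA
    set B := p.2 with hB
    set b : ℕ := biasGamma Adj' (0.9 : ℝ) with hb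
    -- decompositions
    have hS : arcsFrom (blowupAdj Adj' l) A B
        = ∑ u ∈ Finset.range l, ∑ v ∈ Finset.range l, arcsFrom Adj' (lev A u) (lev B v) :=
      (decomp Adj' A B).symm
    have hT : arcsFrom (blowupAdj Adj' l) B A
        = ∑ u ∈ Finset.range l, ∑ v ∈ Finset.range l, arcsFrom Adj' (lev B v) (lev A u) := by
      rw [← decomp Adj' B A]
      exact Finset.sum_comm
    -- per-pair bound
    have key : ∀ u v : ℕ,
        (arcsFrom Adj' (lev A u) (lev B v) : ℝ)
          ≤ (b : ℝ) + (10/9) * (arcsFrom Adj' (lev B v) (lev A u) : ℝ) := by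
      intro u v
      by_cases h : (arcsFrom Adj' (lev B v) (lev A u) : ℝ)
          ≤ (0.9 : ℝ) * (arcsFrom Adj' (lev A u) (lev B v) : ℝ)
      · have hle : arcsFrom Adj' (lev A u) (lev B v) ≤ b := by
          have := Finset.le_sup (f := fun p : Finset W × Finset W =>
            if (arcsFrom Adj' p.2 p.1 : ℝ) ≤ (0.9:ℝ) * (arcsFrom Adj' p.1 p.2 : ℝ) then
              arcsFrom Adj' p.1 p.2 else 0)
            (Finset.mem_univ ((lev A u, lev B v) : Finset W × Finset W))
          rw [hb, biasGamma]
          simpa [h] using this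
        have : (arcsFrom Adj' (lev A u) (lev B v) : ℝ) ≤ (b : ℝ) := by exact_mod_cast hle
        have h0 : (0:ℝ) ≤ (arcsFrom Adj' (lev B v) (lev A u) : ℝ) := Nat.cast_nonneg _
        linarith
      · push_neg at h
        have h0 : (0:ℝ) ≤ (b : ℝ) := Nat.cast_nonneg _
        linarith
    -- sum the bound
    have hsum : (arcsFrom (blowupAdj Adj' l) A B : ℝ)
        ≤ (l : ℝ)^2 * (b : ℝ) + (10/9) * (arcsFrom (blowupAdj Adj' l) B A : ℝ) := by
      rw [hS, hT]
      push_cast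
      calc ∑ u ∈ Finset.range l, ∑ v ∈ Finset.range l,
              (arcsFrom Adj' (lev A u) (lev B v) : ℝ)
          ≤ ∑ u ∈ Finset.range l, ∑ v ∈ Finset.range l,
              ((b : ℝ) + (10/9) * (arcsFrom Adj' (lev B v) (lev A u) : ℝ)) :=
            Finset.sum_le_sum fun u _ => Finset.sum_le_sum fun v _ => key u v
        _ = (l : ℝ)^2 * (b : ℝ) + (10/9) * ∑ u ∈ Finset.range l, ∑ v ∈ Finset.range l,
              (arcsFrom Adj' (lev B v) (lev A u) : ℝ) := by
            simp [Finset.sum_add_distrib, Finset.mul_sum, Finset.card_range]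
            ring
    have hTS : 2 * (arcsFrom (blowupAdj Adj' l) B A : ℝ)
        ≤ (arcsFrom (blowupAdj Adj' l) A B : ℝ) := by exact_mod_cast hcond
    have hbR : (b : ℝ) < f := hbias
    have hb0 : (0:ℝ) ≤ (b:ℝ) := Nat.cast_nonneg _
    nlinarith [sq_nonneg ((l:ℝ)), mul_pos (mul_pos (by norm_num : (0:ℝ) < 16) hf) (mul_pos hlR hlR)]
  · exact_mod_cast hpos
end
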